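/- Let (Λ, 𝔪) be a Noetherian complete local ring and let R = Λ⟦x₁,…,xₙ⟧/I with I ⊆ 𝔪·Λ⟦x₁,…,xₙ⟧ + (x₁,…,xₙ)². If a, b ∈ 𝔪ⁿ satisfy a_i − b_i ∈ 𝔪^ℓ for all i, then for every f ∈ I one has f(a) − f(b) ∈ 𝔪^{ℓ+1}. -/

import Mathlib

open scoped BigOperators

/-- The partial sum of the evaluation of `f ∈ Λ⟦x₁,…,xₙ⟧` at `a`, over multi-indices `e`
with `e i ≤ t` for all `i`. -/
noncomputable def partialEval {Λ : Type*} [CommRing Λ] {n : ℕ}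
    (f : MvPowerSeries (Fin n) Λ) (a : Fin n → Λ) (t : ℕ) : Λ :=
  ∑ e ∈ Finset.Iic (Finsupp.equivFunOnFinite.symm fun _ : Fin n => t),
    MvPowerSeries.coeff (R := Λ) e f * ∏ i, a i ^ e i

/-- `x` is the value `f(a)` of the power series `f` at the tuple `a` of elements of the maximal
ideal: the partial sums converge `𝔪`-adically to `x`. -/
def IsEvalAt {Λ : Type*} [CommRing Λ] [IsLocalRing Λ] {n : ℕ}
    (f : MvPowerSeries (Fin n) Λ) (a : Fin n → Λ) (x : Λ) : Prop :=
  ∀ t : ℕ, x - partialEval f a t ∈ (IsLocalRing.maximalIdeal Λ) ^ t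


section Aux

variable {Λ : Type*} [CommRing Λ] (𝔪 : Ideal Λ)

/-- Auxiliary: the ideal of power series all of whose coefficients in total degree `≤ 1`
lie in `𝔪`. -/
def coeffIdeal (n : ℕ) : Ideal (MvPowerSeries (Fin n) Λ) where
  carrier := {g | ∀ e : Fin n →₀ ℕ, (∑ i, e i) ≤ 1 → MvPowerSeries.coeff (R := Λ) e g ∈ 𝔪}
  add_mem' := fun hg hh e he => by
    rw [map_add]; exact 𝔪.add_mem (hg e he) (hh e he)
  zero_mem' := fun e he => by rw [map_zero]; exact 𝔪.zero_mem
  smul_mem' := fun c g hg e he => by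
    rw [smul_eq_mul, MvPowerSeries.coeff_mul]
    refine Ideal.sum_mem _ fun p hp => Ideal.mul_mem_left _ _ (hg p.2 ?_)
    have hpe : p.1 + p.2 = e := Finset.HasAntidiagonal.mem_antidiagonal.mp hp
    calc ∑ i, p.2 i ≤ ∑ i, (p.1 i + p.2 i) :=
          Finset.sum_le_sum fun i _ => Nat.le_add_left _ _
      _ = ∑ i, e i := Finset.sum_congr rfl fun i _ => by rw [← hpe]; rfl
      _ ≤ 1 := he

lemma pow_sub_pow_mem {a b : Λ} {m : ℕ} (hb : b ∈ 𝔪)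
    (hab : a - b ∈ 𝔪 ^ (m + 1)) (ha : a ∈ 𝔪) :
    ∀ k : ℕ, a ^ k - b ^ k ∈ 𝔪 ^ (m + k) := by
  intro k
  induction k with
  | zero => simpa using (𝔪 ^ (m + 0)).zero_mem
  | succ k ih =>
    have key : a ^ (k + 1) - b ^ (k + 1) = (a ^ k - b ^ k) * a + b ^ k * (a - b) := by ring
    rw [key]
    refine Ideal.add_mem _ ?_ ?_
    · have h0 : m + (k + 1) = (m + k) + 1 := by omega
      rw [h0, pow_succ]
      exact Ideal.mul_mem_mul ih ha
    · have h1 : b ^ k ∈ 𝔪 ^ k := Ideal.pow_mem_pow hb k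
      have h2 := Ideal.mul_mem_mul h1 hab
      rw [← pow_add] at h2
      have h3 : k + (m + 1) = m + (k + 1) := by omega
      rwa [h3] at h2

lemma prod_pow_mem {n : ℕ} {a : Fin n → Λ} (ha : ∀ i, a i ∈ 𝔪) (e : Fin n → ℕ)
    (s : Finset (Fin n)) : (∏ i ∈ s, a i ^ e i) ∈ 𝔪 ^ (∑ i ∈ s, e i) := by
  classical
  induction s using Finset.induction_on with
  | empty => simp
  | @insert i s hi ih =>
    rw [Finset.prod_insert hi, Finset.sum_insert hi, pow_add]
    exact Ideal.mul_mem_mul (Ideal.pow_mem_pow (ha i) _) ih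

lemma prod_sub_prod_mem {n : ℕ} {a b : Fin n → Λ} {m : ℕ}
    (ha : ∀ i, a i ∈ 𝔪) (hb : ∀ i, b i ∈ 𝔪)
    (hab : ∀ i, a i - b i ∈ 𝔪 ^ (m + 1)) (e : Fin n → ℕ) (s : Finset (Fin n)) :
    (∏ i ∈ s, a i ^ e i) - (∏ i ∈ s, b i ^ e i) ∈ 𝔪 ^ (m + ∑ i ∈ s, e i) := by
  classical
  induction s using Finset.induction_on with
  | empty => simpa using (𝔪 ^ (m + 0)).zero_mem
  | @insert i s hi ih =>
    rw [Finset.prod_insert hi, Finset.prod_insert hi, Finset.sum_insert hi]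
    have key : a i ^ e i * ∏ j ∈ s, a j ^ e j - b i ^ e i * ∏ j ∈ s, b j ^ e j
        = (a i ^ e i - b i ^ e i) * ∏ j ∈ s, a j ^ e j
          + b i ^ e i * ((∏ j ∈ s, a j ^ e j) - ∏ j ∈ s, b j ^ e j) := by ring
    rw [key]
    refine Ideal.add_mem _ ?_ ?_
    · have h1 := Ideal.mul_mem_mul
        (pow_sub_pow_mem 𝔪 (hb i) (hab i) (ha i) (e i)) (prod_pow_mem 𝔪 ha e s)
      rw [← pow_add] at h1
      have h0 : m + e i + ∑ j ∈ s, e j = m + (e i + ∑ j ∈ s, e j) := by omega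
      rwa [h0] at h1
    · have h1 := Ideal.mul_mem_mul (Ideal.pow_mem_pow (hb i) (e i)) ih
      rw [← pow_add] at h1
      have h0 : e i + (m + ∑ j ∈ s, e j) = m + (e i + ∑ j ∈ s, e j) := by omega
      rwa [h0] at h1

lemma sup_le_coeffIdeal {n : ℕ} :
    𝔪.map (MvPowerSeries.C (σ := Fin n) (R := Λ)) ⊔
      (Ideal.span (Set.range (MvPowerSeries.X : Fin n → MvPowerSeries (Fin n) Λ))) ^ 2
      ≤ coeffIdeal 𝔪 n := by
  refine sup_le ?_ ?_
  · rw [Ideal.map_le_iff_le_comap]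
    intro c hc
    rw [Ideal.mem_comap]
    intro e he
    rw [MvPowerSeries.coeff_C]
    split
    · exact hc
    · exact 𝔪.zero_mem
  · rw [sq, Ideal.mul_le]
    intro r hr s hs e he
    have hker : Ideal.span (Set.range (MvPowerSeries.X : Fin n → MvPowerSeries (Fin n) Λ))
        ≤ RingHom.ker (MvPowerSeries.constantCoeff (σ := Fin n) (R := Λ)) := by
      rw [Ideal.span_le]
      rintro _ ⟨i, rfl⟩
      exact MvPowerSeries.constantCoeff_X i
    show MvPowerSeries.coeff (R := Λ) e (r * s) ∈ 𝔪
    rw [MvPowerSeries.coeff_mul]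
    refine Ideal.sum_mem _ fun p hp => ?_
    have hpe : p.1 + p.2 = e := Finset.HasAntidiagonal.mem_antidiagonal.mp hp
    by_cases hp1 : p.1 = 0
    · rw [hp1, MvPowerSeries.coeff_zero_eq_constantCoeff, hker hr, zero_mul]
      exact 𝔪.zero_mem
    · have hi : ∃ i, p.1 i ≠ 0 := by
        by_contra h
        push_neg at h
        exact hp1 (Finsupp.ext h)
      obtain ⟨i, hi⟩ := hi
      have h1 : 1 ≤ ∑ j, p.1 j :=
        le_trans (Nat.one_le_iff_ne_zero.mpr hi)
          (Finset.single_le_sum (fun j _ => Nat.zero_le _) (Finset.mem_univ i))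
      have hsum : (∑ j, p.1 j) + ∑ j, p.2 j ≤ 1 := by
        rw [← Finset.sum_add_distrib]
        calc (∑ j, (p.1 j + p.2 j)) = ∑ j, e j :=
              Finset.sum_congr rfl fun j _ => by rw [← hpe]; rfl
          _ ≤ 1 := he
      have h2 : ∀ j, p.2 j = 0 := by
        have : ∑ j, p.2 j = 0 := by omega
        intro j
        exact Finset.sum_eq_zero_iff.mp this j (Finset.mem_univ j)
      have hp2 : p.2 = 0 := Finsupp.ext h2
      rw [hp2, MvPowerSeries.coeff_zero_eq_constantCoeff, hker hs, mul_zero]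
      exact 𝔪.zero_mem

end Aux

/-- Let `(Λ, 𝔪)` be a Noetherian complete local ring and `I ⊆ 𝔪·Λ⟦x₁,…,xₙ⟧ + (x₁,…,xₙ)²` an
ideal of `Λ⟦x₁,…,xₙ⟧` (so `R = Λ⟦x₁,…,xₙ⟧/I`).  If `a, b ∈ 𝔪ⁿ` satisfy `a i − b i ∈ 𝔪^ℓ`
for all `i` (with `ℓ ≥ 1`), then `f(a) − f(b) ∈ 𝔪^{ℓ+1}` for every `f ∈ I`. -/
theorem eval_sub_eval_mem_pow_succ {Λ : Type*} [CommRing Λ] [IsNoetherianRing Λ]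
    [IsLocalRing Λ]
    (hcomplete : IsAdicComplete (IsLocalRing.maximalIdeal Λ) Λ)
    {n : ℕ} (I : Ideal (MvPowerSeries (Fin n) Λ))
    (hI : I ≤ (IsLocalRing.maximalIdeal Λ).map (MvPowerSeries.C (σ := Fin n) (R := Λ)) ⊔
      (Ideal.span (Set.range (MvPowerSeries.X : Fin n → MvPowerSeries (Fin n) Λ))) ^ 2)
    (ℓ : ℕ) (hℓ : 1 ≤ ℓ)
    (a b : Fin n → Λ)
    (haI : ∀ i, a i ∈ IsLocalRing.maximalIdeal Λ)
    (hbI : ∀ i, b i ∈ IsLocalRing.maximalIdeal Λ)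
    (hab : ∀ i, a i - b i ∈ (IsLocalRing.maximalIdeal Λ) ^ ℓ)
    (f : MvPowerSeries (Fin n) Λ) (hf : f ∈ I)
    (x y : Λ) (hx : IsEvalAt f a x) (hy : IsEvalAt f b y) :
    x - y ∈ (IsLocalRing.maximalIdeal Λ) ^ (ℓ + 1) := by
  obtain ⟨m, rfl⟩ : ∃ m, ℓ = m + 1 := ⟨ℓ - 1, by omega⟩
  set 𝔪 := IsLocalRing.maximalIdeal Λ with h𝔪
  have hfc : ∀ e : Fin n →₀ ℕ, (∑ i, e i) ≤ 1 → MvPowerSeries.coeff (R := Λ) e f ∈ 𝔪 :=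
    sup_le_coeffIdeal 𝔪 (hI hf)
  have hPQ : partialEval f a (m + 2) - partialEval f b (m + 2) ∈ 𝔪 ^ (m + 2) := by
    unfold partialEval
    rw [← Finset.sum_sub_distrib]
    refine Ideal.sum_mem _ fun e _ => ?_
    rw [← mul_sub]
    have hd := prod_sub_prod_mem 𝔪 haI hbI hab (fun i => e i) Finset.univ
    rcases Nat.lt_or_ge (∑ i, e i) 2 with h2 | h2
    · rcases Nat.eq_zero_or_pos (∑ i, e i) with h0 | h0
      · have hz : ∀ i, e i = 0 := fun i =>
          Finset.sum_eq_zero_iff.mp h0 i (Finset.mem_univ i)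
        have : (∏ i, a i ^ e i) - ∏ i, b i ^ e i = 0 := by
          rw [Finset.prod_eq_one fun i _ => by rw [hz i, pow_zero],
            Finset.prod_eq_one fun i _ => by rw [hz i, pow_zero], sub_self]
        rw [this, mul_zero]
        exact Ideal.zero_mem _
      · have hc := hfc e (by omega)
        have := Ideal.mul_mem_mul hc hd
        rw [← pow_succ'] at this
        exact Ideal.pow_le_pow_right (by omega) this
    · refine Ideal.mul_mem_left _ _ (Ideal.pow_le_pow_right (by omega) hd)
  have h1 := hx (m + 2)
  have h2 := hy (m + 2)
  have key : x - y = (x - partialEval f a (m + 2)) - (y - partialEval f b (m + 2))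
      + (partialEval f a (m + 2) - partialEval f b (m + 2)) := by ring
  have heq : m + 1 + 1 = m + 2 := rfl
  rw [key, heq]
  exact Ideal.add_mem _ (Ideal.sub_mem _ h1 h2) hPQ
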